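/- Let λ₁,...,λₙ be probability distributions on ℕ satisfying λᵢ(t) ≤ C·α^t/(t+1)² for all t ∈ ℕ, where C ≥ 0 and 0 ≤ α ≤ 1. Then for all θ ≥ 8·C·e·n·(1 + ln n), the probability under the product distribution λ₁ × ··· × λₙ that a sampled vector v has ∑vᵢ ≥ θ is at most α^{θ/2}. -/

import Mathlib

open Finset


private lemma tail_sq_sum : ∀ (k : ℕ) (w : Finset ℕ), w.card = k → ∀ (a : ℕ), 1 ≤ a →
    (∀ j ∈ w, a ≤ j) → ∑ j ∈ w, (1:ℝ)/((j:ℝ)+1)^2 ≤ 1/(a:ℝ) := by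
  intro k
  induction k with
  | zero =>
      intro w hw a ha _
      rw [Finset.card_eq_zero.mp hw]
      simp only [Finset.sum_empty]
      positivity
  | succ k ih =>
      intro w hw a ha hmem
      have hne : w.Nonempty := Finset.card_pos.mp (by omega)
      set j0 := w.min' hne with hj0
      have hj0w : j0 ∈ w := w.min'_mem hne
      have haj0 : a ≤ j0 := hmem _ hj0w
      have hrest : ∀ j ∈ w.erase j0, j0 + 1 ≤ j := by
        intro j hj
        have h1 := w.min'_le j (Finset.mem_of_mem_erase hj)
        have h2 := Finset.ne_of_mem_erase hj
        omega
      have hcard : (w.erase j0).card = k := by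
        rw [Finset.card_erase_of_mem hj0w, hw]; omega
      have hih := ih (w.erase j0) hcard (j0+1) (by omega) hrest
      have hsplit : ∑ j ∈ w, (1:ℝ)/((j:ℝ)+1)^2
          = (1:ℝ)/((j0:ℝ)+1)^2 + ∑ j ∈ w.erase j0, (1:ℝ)/((j:ℝ)+1)^2 :=
        (Finset.add_sum_erase w _ hj0w).symm
      have hj0R : (1:ℝ) ≤ (j0:ℝ) := by exact_mod_cast le_trans ha haj0
      have hcast : ((j0+1:ℕ):ℝ) = (j0:ℝ) + 1 := by push_cast; ring
      have key : (1:ℝ)/((j0:ℝ)+1)^2 + 1/((j0:ℝ)+1) ≤ 1/(j0:ℝ) := by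
        rw [div_add_div _ _ (by positivity) (by positivity),
          div_le_div_iff₀ (by positivity) (by positivity)]
        nlinarith
      have hlast : (1:ℝ)/(j0:ℝ) ≤ 1/(a:ℝ) := by
        apply one_div_le_one_div_of_le
        · exact_mod_cast Nat.one_le_iff_ne_zero.mp ha |> Nat.pos_of_ne_zero
        · exact_mod_cast haj0
      rw [hsplit]
      calc (1:ℝ)/((j0:ℝ)+1)^2 + ∑ j ∈ w.erase j0, (1:ℝ)/((j:ℝ)+1)^2
          ≤ (1:ℝ)/((j0:ℝ)+1)^2 + 1/((j0:ℝ)+1) := by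
            rw [← hcast] at *
            exact add_le_add_right (le_trans hih (by rw [hcast])) _
        _ ≤ 1/(j0:ℝ) := key
        _ ≤ 1/(a:ℝ) := hlast

private lemma layered_sum {ι : Type*} [DecidableEq ι] :
    ∀ (k : ℕ) (I : Finset ι), I.card = k → ∀ (x : ι → ℝ) (a : ℕ → ℝ),
    (∀ i ∈ I, 0 ≤ x i) →
    (∀ j, 1 ≤ j → ∀ T : Finset ι, T ⊆ I → (∀ i ∈ T, a j ≤ x i) → T.card < j) →
    ∑ i ∈ I, x i ≤ ∑ j ∈ Finset.Icc 1 k, a j := by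
  intro k
  induction k with
  | zero =>
      intro I hI x a _ _
      rw [Finset.card_eq_zero.mp hI]
      simp
  | succ k ih =>
      intro I hI x a hx hcnt
      have hne : I.Nonempty := Finset.card_pos.mp (by omega)
      obtain ⟨i0, hi0I, hi0max⟩ := Finset.exists_max_image I x hne
      have hxi0 : x i0 < a 1 := by
        by_contra h
        push_neg at h
        have := hcnt 1 le_rfl {i0} (by simpa using hi0I) (by simpa using h)
        simp at this
      have hcard' : (I.erase i0).card = k := by
        rw [Finset.card_erase_of_mem hi0I, hI]; omega
      have hcnt' : ∀ j, 1 ≤ j → ∀ T : Finset ι, T ⊆ I.erase i0 →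
          (∀ i ∈ T, a (j+1) ≤ x i) → T.card < j := by
        intro j hj T hT hTa
        by_cases hc : a (j+1) ≤ x i0
        · have hi0T : i0 ∉ T := fun h => (Finset.ne_of_mem_erase (hT h)) rfl
          have h1 : (insert i0 T).card < j + 1 := by
            apply hcnt (j+1) (by omega) (insert i0 T)
            · intro i hi
              rcases Finset.mem_insert.mp hi with h | h
              · exact h ▸ hi0I
              · exact Finset.mem_of_mem_erase (hT h)
            · intro i hi
              rcases Finset.mem_insert.mp hi with h | h
              · exact h ▸ hc
              · exact hTa i h
          rw [Finset.card_insert_of_notMem hi0T] at h1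
          omega
        · rcases T.eq_empty_or_nonempty with h | ⟨i, hi⟩
          · rw [h]; simp; omega
          · exfalso
            exact hc (le_trans (hTa i hi) (hi0max i (Finset.mem_of_mem_erase (hT hi))))
      have hih := ih (I.erase i0) hcard' x (fun j => a (j+1))
        (fun i hi => hx i (Finset.mem_of_mem_erase hi)) hcnt'
      have hsplit : ∑ i ∈ I, x i = x i0 + ∑ i ∈ I.erase i0, x i :=
        (Finset.add_sum_erase I x hi0I).symm
      have hre : ∑ j ∈ Finset.Icc 1 k, a (j+1) = ∑ j ∈ Finset.Icc 2 (k+1), a j := by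
        have hmap : (Finset.Icc 1 k).map (addLeftEmbedding 1) = Finset.Icc 2 (k+1) := by
          rw [Finset.map_add_left_Icc]
          congr 1 <;> omega
        rw [← hmap, Finset.sum_map]
        apply Finset.sum_congr rfl
        intro j _
        simp [addLeftEmbedding, add_comm]
      have hins : Finset.Icc 1 (k+1) = insert 1 (Finset.Icc 2 (k+1)) := by
        ext j; simp only [Finset.mem_Icc, Finset.mem_insert]; omega
      have h1notin : (1:ℕ) ∉ Finset.Icc 2 (k+1) := by simp
      rw [hsplit, hins, Finset.sum_insert h1notin, ← hre]
      exact add_le_add hxi0.le hih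

private lemma pow_self_le_exp_mul_factorial :
    ∀ k : ℕ, (k:ℝ)^k ≤ (Real.exp 1)^k * (k.factorial : ℝ) := by
  intro k
  induction k with
  | zero => simp
  | succ k ih =>
      rcases Nat.eq_zero_or_pos k with hk | hk
      · subst hk
        norm_num
      · have hk0 : (0:ℝ) < k := by exact_mod_cast hk
        have hstep : ((k:ℝ)+1)^k ≤ Real.exp 1 * (k:ℝ)^k := by
          have h1 : (k:ℝ)+1 = (k:ℝ) * (1 + 1/(k:ℝ)) := by field_simp
          have h2 : (1 + 1/(k:ℝ)) ≤ Real.exp (1/(k:ℝ)) := by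
            have := Real.add_one_le_exp (1/(k:ℝ)); linarith
          have h3 : (1 + 1/(k:ℝ))^k ≤ (Real.exp (1/(k:ℝ)))^k :=
            pow_le_pow_left₀ (by positivity) h2 k
          have h4 : (Real.exp (1/(k:ℝ)))^k = Real.exp 1 := by
            rw [← Real.exp_nat_mul]
            congr 1
            field_simp
          calc ((k:ℝ)+1)^k = (k:ℝ)^k * (1 + 1/(k:ℝ))^k := by rw [h1, mul_pow]
            _ ≤ (k:ℝ)^k * Real.exp 1 := by
                apply mul_le_mul_of_nonneg_left _ (by positivity)
                rw [← h4] at *; exact h3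
            _ = Real.exp 1 * (k:ℝ)^k := by ring
        have hcast : ((k+1:ℕ):ℝ) = (k:ℝ)+1 := by push_cast; ring
        calc ((k+1:ℕ):ℝ)^(k+1) = ((k:ℝ)+1) * ((k:ℝ)+1)^k := by rw [hcast]; ring
          _ ≤ ((k:ℝ)+1) * (Real.exp 1 * (k:ℝ)^k) := by
              apply mul_le_mul_of_nonneg_left hstep (by positivity)
          _ ≤ ((k:ℝ)+1) * (Real.exp 1 * ((Real.exp 1)^k * (k.factorial:ℝ))) := by
              apply mul_le_mul_of_nonneg_left _ (by positivity)
              exact mul_le_mul_of_nonneg_left ih (Real.exp_pos 1).le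
          _ = (Real.exp 1)^(k+1) * (((k:ℝ)+1) * (k.factorial:ℝ)) := by ring
          _ = (Real.exp 1)^(k+1) * ((k+1).factorial : ℝ) := by
              rw [Nat.factorial_succ]; push_cast; ring

private lemma half_geom_sum : ∀ n : ℕ, ∑ k ∈ Finset.Icc 1 n, (1/2:ℝ)^k = 1 - (1/2:ℝ)^n := by
  intro n
  induction n with
  | zero => simp
  | succ n ih =>
      rw [Finset.sum_Icc_succ_top (by omega : 1 ≤ n+1), ih]
      ring


/-- Concentration of measure for product distributions on `ℕ^n`: if each `λᵢ` is a
probability distribution on `ℕ` with `λᵢ(t) ≤ C·α^t/(t+1)²`, then for all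
`θ ≥ 8·C·e·n·(1 + ln n)`, the probability that `v ∼ λ₁ × ⋯ × λₙ` has `∑ vᵢ ≥ θ`
is at most `α^{θ/2}`. -/
theorem stmt_12 (n : ℕ) (hn : 1 ≤ n) (C α : ℝ) (hC : 0 ≤ C) (hα0 : 0 ≤ α) (hα1 : α ≤ 1)
    (lam : Fin n → ℕ → ℝ) (hnonneg : ∀ i t, 0 ≤ lam i t) (hsum : ∀ i, HasSum (lam i) 1)
    (hbound : ∀ i t, lam i t ≤ C * α ^ t / ((t : ℝ) + 1) ^ 2)
    (θ : ℝ) (hθ : 8 * C * Real.exp 1 * n * (1 + Real.log n) ≤ θ) :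
    (∑' v : Fin n → ℕ, if θ ≤ (∑ i, (v i : ℝ)) then ∏ i, lam i (v i) else 0) ≤
      α ^ (θ / 2) := by
  classical
  have hn0 : (0:ℝ) < n := by exact_mod_cast hn
  have he1 : (0:ℝ) < Real.exp 1 := Real.exp_pos 1
  have hlog : (0:ℝ) ≤ Real.log n := Real.log_nonneg (by exact_mod_cast hn)
  have hC0 : 0 < C := by
    rcases hC.lt_or_eq with h | h
    · exact h
    · exfalso
      set i0 : Fin n := ⟨0, by omega⟩
      have hz : ∀ t, lam i0 t = 0 := by
        intro t
        have h1 := hbound i0 t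
        rw [← h] at h1
        have h2 : lam i0 t ≤ 0 := by
          calc lam i0 t ≤ 0 * α ^ t / ((t:ℝ)+1)^2 := h1
            _ = 0 := by ring
        exact le_antisymm h2 (hnonneg i0 t)
      have h2 := hsum i0
      rw [show (lam i0) = (fun _ : ℕ => (0:ℝ)) from funext hz] at h2
      have h3 : (1:ℝ) = 0 := h2.unique hasSum_zero
      norm_num at h3
  set L : ℝ := 1 + Real.log n with hLdef
  have hL1 : (1:ℝ) ≤ L := by simp only [hLdef]; linarith
  have hL0 : (0:ℝ) < L := by linarith
  have hθ0 : (0:ℝ) < θ := by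
    nlinarith [mul_pos (mul_pos (mul_pos (mul_pos (by norm_num : (0:ℝ)<8) hC0) he1) hn0) hL0]
  -- the cut-off levels
  set m : ℕ → ℝ := fun k => θ/(4*L*(k:ℝ)) with hmdef
  have hmpos : ∀ k : ℕ, 1 ≤ k → 0 < m k := by
    intro k hk
    have hk0 : (0:ℝ) < (k:ℝ) := by exact_mod_cast hk
    simp only [hmdef]
    positivity
  have hmnn : ∀ k : ℕ, 0 ≤ m k := by
    intro k
    rcases Nat.eq_zero_or_pos k with h | h
    · simp [hmdef, h]
    · exact (hmpos k h).le
  have hmanti : ∀ j j' : ℕ, 1 ≤ j → j ≤ j' → m j' ≤ m j := by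
    intro j j' hj hjj
    have hj0 : (0:ℝ) < (j:ℝ) := by exact_mod_cast hj
    have hjR : (j:ℝ) ≤ (j':ℝ) := by exact_mod_cast hjj
    simp only [hmdef]
    apply div_le_div_of_nonneg_left hθ0.le (by positivity)
    nlinarith
  -- the events
  set E : Finset (Fin n) → (Fin n → ℕ) → Prop :=
    fun S v => (∀ i ∈ S, m S.card ≤ (v i:ℝ)) ∧ θ/2 ≤ ∑ i ∈ S, (v i:ℝ) with hEdef
  -- harmonic-sum bound on the levels
  have hharm : ∑ j ∈ Finset.Icc 1 n, m j ≤ θ/4 := by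
    have h1 : ∀ j ∈ Finset.Icc 1 n, m j = (θ/(4*L)) * ((j:ℝ))⁻¹ := by
      intro j hj
      have hj1 : 1 ≤ j := (Finset.mem_Icc.mp hj).1
      have hj0 : (0:ℝ) < (j:ℝ) := by exact_mod_cast hj1
      simp only [hmdef]
      field_simp
      try ring
    rw [Finset.sum_congr rfl h1, ← Finset.mul_sum]
    have h2 : ∑ j ∈ Finset.Icc 1 n, ((j:ℝ))⁻¹ = (harmonic n : ℝ) := by
      rw [harmonic_eq_sum_Icc]
      push_cast
      try rfl
    rw [h2]
    have h3 : (harmonic n : ℝ) ≤ L := by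
      rw [hLdef]; exact harmonic_le_one_add_log n
    calc (θ/(4*L)) * (harmonic n : ℝ) ≤ (θ/(4*L)) * L := by
          apply mul_le_mul_of_nonneg_left h3 (by positivity)
      _ = θ/4 := by field_simp
  -- certificate construction
  have hcert : ∀ v : Fin n → ℕ, θ ≤ (∑ i, (v i:ℝ)) → ∃ S : Finset (Fin n), 0 < S.card ∧ E S v := by
    intro v hv
    set P : Finset (Fin n) → Prop := fun S => ∀ i ∈ S, m S.card ≤ (v i:ℝ) with hPdef
    have hPne : ((univ : Finset (Fin n)).powerset.filter P).Nonempty := by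
      refine ⟨∅, Finset.mem_filter.mpr ⟨Finset.mem_powerset.mpr (Finset.empty_subset _), ?_⟩⟩
      intro i hi
      simp at hi
    obtain ⟨S0, hS0mem, hS0max⟩ := Finset.exists_max_image _ Finset.card hPne
    have hS0P : P S0 := (Finset.mem_filter.mp hS0mem).2
    have hS0max' : ∀ T : Finset (Fin n), P T → T.card ≤ S0.card := fun T h2 =>
      hS0max T (Finset.mem_filter.mpr ⟨Finset.mem_powerset.mpr (Finset.subset_univ T), h2⟩)
    have hcnt : ∀ j, 1 ≤ j → ∀ T : Finset (Fin n), T ⊆ S0ᶜ →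
        (∀ i ∈ T, m (S0.card + j) ≤ (v i:ℝ)) → T.card < j := by
      intro j hj T hT hTv
      by_contra hcon
      push_neg at hcon
      have hdisj : Disjoint S0 T :=
        Finset.disjoint_left.mpr (fun a haS haT => (Finset.mem_compl.mp (hT haT)) haS)
      have hcardU : (S0 ∪ T).card = S0.card + T.card := Finset.card_union_of_disjoint hdisj
      have hPU : P (S0 ∪ T) := by
        intro i hi
        rw [hcardU]
        rcases Finset.mem_union.mp hi with h | h
        · have h1 : 1 ≤ S0.card := Finset.card_pos.mpr ⟨i, h⟩
          exact le_trans (hmanti S0.card (S0.card + T.card) h1 (by omega)) (hS0P i h)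
        · exact le_trans (hmanti (S0.card + j) (S0.card + T.card) (by omega) (by omega)) (hTv i h)
      have := hS0max' _ hPU
      rw [hcardU] at this
      omega
    have hcompl : ∑ i ∈ S0ᶜ, (v i:ℝ) ≤ ∑ j ∈ Finset.Icc 1 (S0ᶜ.card), m (S0.card + j) :=
      layered_sum S0ᶜ.card S0ᶜ rfl _ _ (fun i _ => by positivity)
        (fun j hj T hT hTv => hcnt j hj T hT hTv)
    have hre : ∑ j ∈ Finset.Icc 1 (S0ᶜ.card), m (S0.card + j) ≤ θ/4 := by
      have hmap : ∑ j ∈ Finset.Icc 1 (S0ᶜ.card), m (S0.card + j)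
          = ∑ j ∈ Finset.Icc (S0.card + 1) (S0.card + S0ᶜ.card), m j := by
        rw [← Finset.map_add_left_Icc, Finset.sum_map]
        apply Finset.sum_congr rfl
        intro j _
        simp [addLeftEmbedding]
      have hcards : S0.card + S0ᶜ.card = n := by
        rw [Finset.card_compl]
        have := Finset.card_le_univ S0
        simp only [Fintype.card_fin] at *
        omega
      have hsub : Finset.Icc (S0.card + 1) (S0.card + S0ᶜ.card) ⊆ Finset.Icc 1 n := by
        intro j hj
        rw [Finset.mem_Icc] at *
        omega
      calc ∑ j ∈ Finset.Icc 1 (S0ᶜ.card), m (S0.card + j)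
          = ∑ j ∈ Finset.Icc (S0.card + 1) (S0.card + S0ᶜ.card), m j := hmap
        _ ≤ ∑ j ∈ Finset.Icc 1 n, m j :=
            Finset.sum_le_sum_of_subset_of_nonneg hsub (fun j _ _ => hmnn j)
        _ ≤ θ/4 := hharm
    have htot : ∑ i ∈ S0ᶜ, (v i:ℝ) + ∑ i ∈ S0, (v i:ℝ) = ∑ i, (v i:ℝ) :=
      Finset.sum_compl_add_sum S0 _
    have hS0sum : θ/2 ≤ ∑ i ∈ S0, (v i:ℝ) := by linarith
    have hS0card : 0 < S0.card := by
      by_contra h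
      push_neg at h
      have hS0e : S0 = ∅ := Finset.card_eq_zero.mp (by omega)
      rw [hS0e] at htot
      simp only [Finset.compl_empty, Finset.sum_empty, add_zero] at htot
      have h4 : ∑ i ∈ (univ : Finset (Fin n)), (v i:ℝ) ≤ θ/4 := by
        rw [hS0e] at hcompl hre
        simp only [Finset.compl_empty] at hcompl
        exact le_trans hcompl (by simpa [hS0e] using hre)
      have h5 : ∑ i, (v i:ℝ) ≤ θ/4 := h4
      linarith
    exact ⟨S0, hS0card, hS0P, hS0sum⟩
  -- power helper
  have hpow : ∀ N : ℕ, θ/2 ≤ (N:ℝ) → α^N ≤ α ^ (θ/2) := by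
    intro N hN
    rcases eq_or_lt_of_le hα0 with h0 | h0
    · have hN0 : N ≠ 0 := by
        intro h
        rw [h] at hN
        simp only [Nat.cast_zero] at hN
        linarith
      rw [← h0, zero_pow hN0, Real.zero_rpow (ne_of_gt (by linarith : (0:ℝ) < θ/2))]
    · rw [← Real.rpow_natCast α N]
      exact Real.rpow_le_rpow_of_exponent_ge h0 hα1 hN
  have hrpnn : (0:ℝ) ≤ α ^ (θ/2) := Real.rpow_nonneg hα0 _
  -- reduce to finite sums
  apply tsum_le_of_sum_le' hrpnn
  intro u
  set F : (Fin n → ℕ) → ℝ := fun v => ∏ i, lam i (v i) with hFdef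
  have hFnn : ∀ v, 0 ≤ F v := fun v => Finset.prod_nonneg (fun i _ => hnonneg i _)
  -- per-event bound
  have hevt : ∀ S : Finset (Fin n), 0 < S.card →
      ∑ v ∈ u.filter (fun v => E S v), F v ≤ α ^ (θ/2) * (C/(m S.card))^(S.card) := by
    intro S hScard
    have hmm : 0 < m S.card := hmpos _ hScard
    set g : Fin n → ℕ → ℝ := fun i t =>
      if i ∈ S then (if m S.card ≤ (t:ℝ) then C/((t:ℝ)+1)^2 else 0) else lam i t with hgdef
    have hg0 : ∀ i t, 0 ≤ g i t := by
      intro i t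
      simp only [hgdef]
      split
      · split
        · positivity
        · exact le_rfl
      · exact hnonneg i t
    have hpt : ∀ v ∈ u.filter (fun v => E S v), F v ≤ α ^ (θ/2) * ∏ i, g i (v i) := by
      intro v hv
      obtain ⟨hvS, hvsum⟩ : E S v := (Finset.mem_filter.mp hv).2
      have e2 : ∏ i ∈ S, lam i (v i) ≤ ∏ i ∈ S, (α^(v i) * (C/((v i:ℝ)+1)^2)) := by
        apply Finset.prod_le_prod (fun i _ => hnonneg i _)
        intro i hi
        calc lam i (v i) ≤ C * α^(v i) / ((v i:ℝ)+1)^2 := hbound i (v i)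
          _ = α^(v i) * (C/((v i:ℝ)+1)^2) := by ring
      have e3 : ∏ i ∈ S, (α^(v i) * (C/((v i:ℝ)+1)^2))
          = α^(∑ i ∈ S, v i) * ∏ i ∈ S, (C/((v i:ℝ)+1)^2) := by
        rw [Finset.prod_mul_distrib, Finset.prod_pow_eq_pow_sum]
      have e4 : α^(∑ i ∈ S, v i) ≤ α ^ (θ/2) := by
        apply hpow
        rw [Nat.cast_sum]
        exact hvsum
      have e5 : ∏ i ∈ S, (C/((v i:ℝ)+1)^2) = ∏ i ∈ S, g i (v i) := by
        apply Finset.prod_congr rfl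
        intro i hi
        simp only [hgdef, if_pos hi, if_pos (hvS i hi)]
      have e6 : ∏ i ∈ Sᶜ, lam i (v i) = ∏ i ∈ Sᶜ, g i (v i) := by
        apply Finset.prod_congr rfl
        intro i hi
        simp only [hgdef, if_neg (Finset.mem_compl.mp hi)]
      have hprodnn : (0:ℝ) ≤ ∏ i ∈ Sᶜ, lam i (v i) :=
        Finset.prod_nonneg (fun i _ => hnonneg i _)
      have hprodnn2 : (0:ℝ) ≤ ∏ i ∈ S, (C/((v i:ℝ)+1)^2) :=
        Finset.prod_nonneg (fun i _ => by positivity)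
      calc F v = (∏ i ∈ S, lam i (v i)) * ∏ i ∈ Sᶜ, lam i (v i) :=
            (Finset.prod_mul_prod_compl S _).symm
        _ ≤ (α^(∑ i ∈ S, v i) * ∏ i ∈ S, (C/((v i:ℝ)+1)^2)) * ∏ i ∈ Sᶜ, lam i (v i) := by
            apply mul_le_mul_of_nonneg_right _ hprodnn
            rw [← e3]
            exact e2
        _ ≤ (α ^ (θ/2) * ∏ i ∈ S, (C/((v i:ℝ)+1)^2)) * ∏ i ∈ Sᶜ, lam i (v i) := by
            apply mul_le_mul_of_nonneg_right (mul_le_mul_of_nonneg_right e4 hprodnn2) hprodnn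
        _ = α ^ (θ/2) * ((∏ i ∈ S, g i (v i)) * ∏ i ∈ Sᶜ, g i (v i)) := by
            rw [← e5, ← e6]; ring
        _ = α ^ (θ/2) * ∏ i, g i (v i) := by rw [Finset.prod_mul_prod_compl]
    have hsp : ∑ v ∈ u.filter (fun v => E S v), ∏ i, g i (v i) ≤ (C/(m S.card))^(S.card) := by
      set u' := u.filter (fun v => E S v) with hu'
      set t : Fin n → Finset ℕ := fun i => u'.image (fun v => v i) with ht
      have hsub : u' ⊆ Fintype.piFinset t := by
        intro v hv
        apply Fintype.mem_piFinset.mpr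
        intro i
        exact Finset.mem_image_of_mem _ hv
      have h1 : ∑ v ∈ u', ∏ i, g i (v i) ≤ ∑ v ∈ Fintype.piFinset t, ∏ i, g i (v i) :=
        Finset.sum_le_sum_of_subset_of_nonneg hsub
          (fun v _ _ => Finset.prod_nonneg (fun i _ => hg0 i _))
      have h2 : ∑ v ∈ Fintype.piFinset t, ∏ i, g i (v i) = ∏ i, ∑ j ∈ t i, g i j :=
        (Finset.prod_univ_sum t g).symm
      have h3 : ∏ i, ∑ j ∈ t i, g i j ≤ ∏ i, (if i ∈ S then C/(m S.card) else 1) := by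
        apply Finset.prod_le_prod (fun i _ => Finset.sum_nonneg (fun j _ => hg0 i j))
        intro i _
        by_cases hiS : i ∈ S
        · simp only [hgdef, if_pos hiS]
          have hs1 : ∑ j ∈ t i, (if m S.card ≤ (j:ℝ) then C/((j:ℝ)+1)^2 else 0)
              = ∑ j ∈ (t i).filter (fun j : ℕ => m S.card ≤ (j:ℝ)), C/((j:ℝ)+1)^2 :=
            (Finset.sum_filter _ _).symm
          have hs2 : ∑ j ∈ (t i).filter (fun j : ℕ => m S.card ≤ (j:ℝ)), C/((j:ℝ)+1)^2
              = C * ∑ j ∈ (t i).filter (fun j : ℕ => m S.card ≤ (j:ℝ)), (1:ℝ)/((j:ℝ)+1)^2 := by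
            rw [Finset.mul_sum]
            apply Finset.sum_congr rfl
            intro j _
            ring
          have htail : ∑ j ∈ (t i).filter (fun j : ℕ => m S.card ≤ (j:ℝ)), (1:ℝ)/((j:ℝ)+1)^2
              ≤ 1/((⌈m S.card⌉₊ : ℕ):ℝ) := by
            apply tail_sq_sum _ _ rfl _ (Nat.one_le_ceil_iff.mpr hmm)
            intro j hj
            exact Nat.ceil_le.mpr (Finset.mem_filter.mp hj).2
          have h1m : (1:ℝ)/((⌈m S.card⌉₊ : ℕ):ℝ) ≤ 1/(m S.card) :=
            one_div_le_one_div_of_le hmm (Nat.le_ceil _)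
          rw [hs1, hs2]
          calc C * ∑ j ∈ (t i).filter (fun j : ℕ => m S.card ≤ (j:ℝ)), (1:ℝ)/((j:ℝ)+1)^2
              ≤ C * (1/(m S.card)) :=
                mul_le_mul_of_nonneg_left (le_trans htail h1m) hC
            _ = C/(m S.card) := by ring
        · simp only [hgdef, if_neg hiS]
          exact sum_le_hasSum (t i) (fun j _ => hnonneg i j) (hsum i)
      have h4 : ∏ i, (if i ∈ S then C/(m S.card) else 1) = (C/(m S.card))^(S.card) := by
        rw [← Finset.prod_mul_prod_compl S]
        rw [Finset.prod_congr rfl (fun i (hi : i ∈ S) => if_pos hi),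
          Finset.prod_congr rfl (fun i (hi : i ∈ Sᶜ) => if_neg (Finset.mem_compl.mp hi)),
          Finset.prod_const, Finset.prod_const_one, mul_one]
      calc ∑ v ∈ u', ∏ i, g i (v i) ≤ ∑ v ∈ Fintype.piFinset t, ∏ i, g i (v i) := h1
        _ = ∏ i, ∑ j ∈ t i, g i j := h2
        _ ≤ ∏ i, (if i ∈ S then C/(m S.card) else 1) := h3
        _ = (C/(m S.card))^(S.card) := h4
    calc ∑ v ∈ u.filter (fun v => E S v), F v
        ≤ ∑ v ∈ u.filter (fun v => E S v), α ^ (θ/2) * ∏ i, g i (v i) :=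
          Finset.sum_le_sum hpt
      _ = α ^ (θ/2) * ∑ v ∈ u.filter (fun v => E S v), ∏ i, g i (v i) := by
          rw [Finset.mul_sum]
      _ ≤ α ^ (θ/2) * (C/(m S.card))^(S.card) :=
          mul_le_mul_of_nonneg_left hsp hrpnn
  -- union bound
  set 𝒮 : Finset (Finset (Fin n)) :=
    (univ : Finset (Fin n)).powerset.filter (fun S => 0 < S.card) with h𝒮
  have hub : ∑ v ∈ u, (if θ ≤ (∑ i, (v i:ℝ)) then F v else 0)
      ≤ ∑ S ∈ 𝒮, ∑ v ∈ u.filter (fun v => E S v), F v := by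
    have hpt2 : ∀ v ∈ u, (if θ ≤ ∑ i, (v i:ℝ) then F v else 0)
        ≤ ∑ S ∈ 𝒮, (if E S v then F v else 0) := by
      intro v _
      by_cases hv : θ ≤ ∑ i, (v i:ℝ)
      · rw [if_pos hv]
        obtain ⟨S, hSc, hSE⟩ := hcert v hv
        have hmem : S ∈ 𝒮 :=
          Finset.mem_filter.mpr ⟨Finset.mem_powerset.mpr (Finset.subset_univ S), hSc⟩
        have hsingle := Finset.single_le_sum (f := fun S => if E S v then F v else 0)
          (fun S _ => by split; exacts [hFnn v, le_rfl]) hmem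
        rw [if_pos hSE] at hsingle
        exact hsingle
      · rw [if_neg hv]
        exact Finset.sum_nonneg (fun S _ => by split; exacts [hFnn v, le_rfl])
    calc ∑ v ∈ u, (if θ ≤ (∑ i, (v i:ℝ)) then F v else 0)
        ≤ ∑ v ∈ u, ∑ S ∈ 𝒮, (if E S v then F v else 0) := Finset.sum_le_sum hpt2
      _ = ∑ S ∈ 𝒮, ∑ v ∈ u, (if E S v then F v else 0) := Finset.sum_comm
      _ = ∑ S ∈ 𝒮, ∑ v ∈ u.filter (fun v => E S v), F v := by
          apply Finset.sum_congr rfl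
          intro S _
          exact (Finset.sum_filter _ _).symm
  -- numeric bound per subset
  have hnum : ∀ S ∈ 𝒮, (C/(m S.card))^(S.card) ≤ ((S.card:ℝ)/(2*Real.exp 1*n))^(S.card) := by
    intro S hS
    have hk1 : 1 ≤ S.card := (Finset.mem_filter.mp hS).2
    have hkR : (1:ℝ) ≤ (S.card:ℝ) := by exact_mod_cast hk1
    have hmm : 0 < m S.card := hmpos _ hk1
    have hks : (0:ℝ) < (S.card:ℝ) := by linarith
    apply pow_le_pow_left₀ (by positivity)
    rw [div_le_div_iff₀ hmm (by positivity)]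
    simp only [hmdef]
    have heq : (S.card:ℝ) * (θ/(4*L*(S.card:ℝ))) = θ/(4*L) := by
      field_simp
    rw [heq, le_div_iff₀ (by positivity)]
    have heq2 : C * (2*Real.exp 1*(n:ℝ)) * (4*L) = 8*C*Real.exp 1*(n:ℝ)*L := by ring
    linarith [hθ, heq2.le, heq2.ge]
  -- counting bound
  have h6 : ∑ S ∈ 𝒮, ((S.card:ℝ)/(2*Real.exp 1*n))^(S.card) ≤ 1 := by
    have hfib : ∑ k ∈ Finset.Icc 1 n,
        ∑ S ∈ 𝒮.filter (fun S => S.card = k), ((S.card:ℝ)/(2*Real.exp 1*n))^(S.card)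
        = ∑ S ∈ 𝒮, ((S.card:ℝ)/(2*Real.exp 1*n))^(S.card) := by
      apply Finset.sum_fiberwise_of_maps_to
      intro S hS
      rw [Finset.mem_Icc]
      constructor
      · exact (Finset.mem_filter.mp hS).2
      · calc S.card ≤ Fintype.card (Fin n) := Finset.card_le_univ S
          _ = n := Fintype.card_fin n
    rw [← hfib]
    have hinner : ∀ k ∈ Finset.Icc 1 n,
        ∑ S ∈ 𝒮.filter (fun S => S.card = k), ((S.card:ℝ)/(2*Real.exp 1*n))^(S.card)
        ≤ (1/2:ℝ)^k := by
      intro k hk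
      have hkk := (Finset.mem_Icc.mp hk).1
      have hrw : ∀ S ∈ 𝒮.filter (fun S => S.card = k),
          ((S.card:ℝ)/(2*Real.exp 1*n))^(S.card) = ((k:ℝ)/(2*Real.exp 1*n))^k := by
        intro S hS
        rw [(Finset.mem_filter.mp hS).2]
      rw [Finset.sum_congr rfl hrw, Finset.sum_const, nsmul_eq_mul]
      have hcardle : ((𝒮.filter (fun S => S.card = k)).card : ℝ) ≤ (n.choose k : ℝ) := by
        have hsub : 𝒮.filter (fun S => S.card = k) ⊆ Finset.powersetCard k univ := by
          intro S hS
          rw [Finset.powersetCard_eq_filter]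
          exact Finset.mem_filter.mpr ⟨(Finset.mem_filter.mp (Finset.mem_filter.mp hS).1).1,
            (Finset.mem_filter.mp hS).2⟩
        have := Finset.card_le_card hsub
        rw [Finset.card_powersetCard, Finset.card_univ, Fintype.card_fin] at this
        exact_mod_cast this
      have hq : (n.choose k : ℝ) * ((k:ℝ)/(2*Real.exp 1*n))^k ≤ (1/2:ℝ)^k := by
        have hd : (n.choose k) * k.factorial ≤ n^k := by
          rw [mul_comm, ← Nat.descFactorial_eq_factorial_mul_choose]
          exact Nat.descFactorial_le_pow n k
        have hdR : (n.choose k:ℝ) * (k.factorial:ℝ) ≤ (n:ℝ)^k := by exact_mod_cast hd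
        have hkk2 := pow_self_le_exp_mul_factorial k
        have hck : (n.choose k : ℝ) * (k:ℝ)^k ≤ (Real.exp 1)^k * (n:ℝ)^k := by
          calc (n.choose k:ℝ) * (k:ℝ)^k
              ≤ (n.choose k:ℝ) * ((Real.exp 1)^k * (k.factorial:ℝ)) :=
                mul_le_mul_of_nonneg_left hkk2 (by positivity)
            _ = (Real.exp 1)^k * ((n.choose k:ℝ) * (k.factorial:ℝ)) := by ring
            _ ≤ (Real.exp 1)^k * (n:ℝ)^k :=
                mul_le_mul_of_nonneg_left hdR (by positivity)
        rw [div_pow, ← mul_div_assoc, div_le_iff₀ (by positivity)]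
        have heq : (1/2:ℝ)^k * (2*Real.exp 1*n)^k = (Real.exp 1)^k * (n:ℝ)^k := by
          rw [← mul_pow]
          have : (1/2:ℝ) * (2*Real.exp 1*n) = Real.exp 1 * n := by ring
          rw [this, mul_pow]
        rw [heq]
        exact hck
      calc ((𝒮.filter (fun S => S.card = k)).card : ℝ) * ((k:ℝ)/(2*Real.exp 1*n))^k
          ≤ (n.choose k : ℝ) * ((k:ℝ)/(2*Real.exp 1*n))^k := by
            apply mul_le_mul_of_nonneg_right hcardle (by positivity)
        _ ≤ (1/2:ℝ)^k := hq
    calc ∑ k ∈ Finset.Icc 1 n,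
        ∑ S ∈ 𝒮.filter (fun S => S.card = k), ((S.card:ℝ)/(2*Real.exp 1*n))^(S.card)
        ≤ ∑ k ∈ Finset.Icc 1 n, (1/2:ℝ)^k := Finset.sum_le_sum hinner
      _ = 1 - (1/2:ℝ)^n := half_geom_sum n
      _ ≤ 1 := by
          have : (0:ℝ) ≤ (1/2:ℝ)^n := by positivity
          linarith
  -- put everything together
  calc ∑ v ∈ u, (if θ ≤ (∑ i, (v i:ℝ)) then ∏ i, lam i (v i) else 0)
      ≤ ∑ S ∈ 𝒮, ∑ v ∈ u.filter (fun v => E S v), F v := hub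
    _ ≤ ∑ S ∈ 𝒮, α ^ (θ/2) * (C/(m S.card))^(S.card) :=
        Finset.sum_le_sum (fun S hS => hevt S (Finset.mem_filter.mp hS).2)
    _ ≤ ∑ S ∈ 𝒮, α ^ (θ/2) * ((S.card:ℝ)/(2*Real.exp 1*n))^(S.card) :=
        Finset.sum_le_sum (fun S hS => mul_le_mul_of_nonneg_left (hnum S hS) hrpnn)
    _ = α ^ (θ/2) * ∑ S ∈ 𝒮, ((S.card:ℝ)/(2*Real.exp 1*n))^(S.card) := by
        rw [Finset.mul_sum]
    _ ≤ α ^ (θ/2) * 1 := mul_le_mul_of_nonneg_left h6 hrpnn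
    _ = α ^ (θ/2) := mul_one _
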